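/- Define G : (0,1) × (0,1) → ℝ by G(r,s) = min{−log r, −log s} / (s (log s)²). Then: (i) for every r ∈ (0,1) the function s ↦ (1 − s) G(r,s) is Lebesgue integrable on (0,1); (ii) there exists a constant C > 0 such that for every r ∈ (0, 1/2], ∫₀¹ (1 − s) G(r,s) ds ≤ C · log(1 − log r); and (iii) ∫₀¹ (1 − s) G(r,s) ds tends to 0 as r → 1⁻. -/

import Mathlib

open MeasureTheory Set

/-- The Green's function of the reduced one-dimensional Laplacian on the punctured disk:
`G(r,s) = min{−log r, −log s} / (s (log s)²)`. -/
noncomputable def greenG (r s : ℝ) : ℝ :=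
  min (-Real.log r) (-Real.log s) / (s * (Real.log s) ^ 2)

noncomputable def F1 (s : ℝ) : ℝ := (-Real.log s)⁻¹
noncomputable def F2 (s : ℝ) : ℝ := -Real.log (-Real.log s)

lemma logneg {s : ℝ} (h0 : 0 < s) (h1 : s < 1) : 0 < -Real.log s := by
  have := Real.log_neg h0 h1; linarith

lemma F1_deriv {s : ℝ} (h0 : 0 < s) (h1 : s < 1) :
    HasDerivAt F1 ((s * Real.log s ^ 2)⁻¹) s := by
  have hlog : Real.log s ≠ 0 := by have := Real.log_neg h0 h1; linarith
  have h := ((Real.hasDerivAt_log h0.ne').neg).inv (by simpa using hlog)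
  refine (show HasDerivAt F1 _ s from h).congr_deriv ?_
  simp only [Pi.neg_apply]
  field_simp

lemma F2_deriv {s : ℝ} (h0 : 0 < s) (h1 : s < 1) :
    HasDerivAt F2 ((s * -Real.log s)⁻¹) s := by
  have hl := logneg h0 h1
  have h := (((Real.hasDerivAt_log h0.ne').neg).log hl.ne').neg
  refine (show HasDerivAt F2 _ s from h).congr_deriv ?_
  simp only [Pi.neg_apply]
  field_simp

lemma F1_cont {b : ℝ} (hb : b < 1) : ContinuousOn F1 (Icc 0 b) := by
  intro x hx
  rcases eq_or_lt_of_le hx.1 with h | h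
  · have : Filter.Tendsto F1 (nhdsWithin 0 (Ioi 0)) (nhds (F1 0)) := by
      have h1 : Filter.Tendsto (fun s : ℝ => -Real.log s) (nhdsWithin 0 (Ioi 0)) Filter.atTop :=
        Filter.tendsto_neg_atBot_atTop.comp Real.tendsto_log_nhdsGT_zero
      have := h1.inv_tendsto_atTop
      show Filter.Tendsto (fun s : ℝ => (-Real.log s)⁻¹) _ _
      simpa [F1, Real.log_zero, Pi.inv_def] using this
    have : ContinuousWithinAt F1 (Ici 0) 0 := continuousWithinAt_Ioi_iff_Ici.mp this
    rw [← h]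
    exact this.mono (Icc_subset_Ici_self)
  · have hx1 : x < 1 := lt_of_le_of_lt hx.2 hb
    have hlog : Real.log x ≠ 0 := by have := Real.log_neg h hx1; linarith
    exact (((Real.continuousAt_log h.ne').neg).inv₀ (by simpa using hlog)).continuousWithinAt

lemma integrable1 {c : ℝ} (h0 : 0 < c) (h1 : c < 1) :
    IntegrableOn (fun s => (s * Real.log s ^ 2)⁻¹) (Ioo 0 c) volume := by
  have := intervalIntegral.integrableOn_deriv_of_nonneg (F1_cont h1)
    (fun x hx => F1_deriv hx.1 (hx.2.trans h1)) ?_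
  · exact this.mono_set Ioo_subset_Ioc_self
  intro x hx
  have h2 : 0 < x * Real.log x ^ 2 := by
    apply mul_pos hx.1
    have h3 := logneg hx.1 (hx.2.trans h1)
    have h4 : Real.log x ≠ 0 := by linarith
    positivity
  exact (inv_pos.mpr h2).le

lemma value1 {c : ℝ} (h0 : 0 < c) (h1 : c < 1) :
    ∫ s in Ioo 0 c, (s * Real.log s ^ 2)⁻¹ = (-Real.log c)⁻¹ := by
  have hint : IntervalIntegrable (fun s => (s * Real.log s ^ 2)⁻¹) volume 0 c := by
    rw [intervalIntegrable_iff_integrableOn_Ioc_of_le h0.le,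
      integrableOn_Ioc_iff_integrableOn_Ioo]
    exact integrable1 h0 h1
  have := intervalIntegral.integral_eq_sub_of_hasDeriv_right_of_le h0.le (F1_cont h1)
    (fun x hx => (F1_deriv hx.1 (hx.2.trans h1)).hasDerivWithinAt) hint
  rw [intervalIntegral.integral_of_le h0.le, MeasureTheory.integral_Ioc_eq_integral_Ioo] at this
  rw [this]
  simp [F1, Real.log_zero]

lemma value2 {r : ℝ} (h0 : 0 < r) (h1 : r ≤ 1/2) :
    ∫ s in Ioo r (1/2), (s * -Real.log s)⁻¹ =
      Real.log (-Real.log r) - Real.log (Real.log 2) := by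
  have hcont : ContinuousOn (fun s : ℝ => (s * -Real.log s)⁻¹) (Icc r (1/2)) := by
    intro x hx
    have hx0 : 0 < x := lt_of_lt_of_le h0 hx.1
    have hx1 : x < 1 := lt_of_le_of_lt hx.2 (by norm_num)
    have hl := logneg hx0 hx1
    exact (((continuousAt_id).mul ((Real.continuousAt_log hx0.ne').neg)).inv₀
      (mul_pos hx0 hl).ne').continuousWithinAt
  have hint : IntervalIntegrable (fun s : ℝ => (s * -Real.log s)⁻¹) volume r (1/2) :=
    hcont.intervalIntegrable_of_Icc h1
  have := intervalIntegral.integral_eq_sub_of_hasDeriv_right_of_le h1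
    (fun x hx => by
      have hx0 : 0 < x := lt_of_lt_of_le h0 hx.1
      have hx1 : x < 1 := lt_of_le_of_lt hx.2 (by norm_num)
      exact ((F2_deriv hx0 hx1).continuousAt).continuousWithinAt)
    (fun x hx => (F2_deriv (h0.trans hx.1) (hx.2.trans (by norm_num))).hasDerivWithinAt) hint
  rw [intervalIntegral.integral_of_le h1, MeasureTheory.integral_Ioc_eq_integral_Ioo] at this
  rw [this]
  have : -Real.log (1/2 : ℝ) = Real.log 2 := by
    rw [Real.log_div one_ne_zero two_ne_zero, Real.log_one]; ring
  simp [F2, this]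
  ring

lemma green_meas (r : ℝ) : Measurable (fun s => (1 - s) * greenG r s) := by
  unfold greenG
  exact (measurable_const.sub measurable_id).mul
    ((measurable_const.min Real.measurable_log.neg).div
      (measurable_id.mul ((Real.measurable_log.pow_const 2))))

lemma green_nonneg {r s : ℝ} (hr0 : 0 < r) (hr1 : r < 1) (hs0 : 0 < s) (hs1 : s < 1) :
    0 ≤ (1 - s) * greenG r s := by
  unfold greenG
  have h1 : (0:ℝ) ≤ min (-Real.log r) (-Real.log s) :=
    le_min (le_of_lt (logneg hr0 hr1)) (le_of_lt (logneg hs0 hs1))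
  have h2 : (0:ℝ) ≤ s * Real.log s ^ 2 := by positivity
  have h3 : 0 ≤ min (-Real.log r) (-Real.log s) / (s * Real.log s ^ 2) := div_nonneg h1 h2
  nlinarith

lemma green_le1 {r s : ℝ} (hr0 : 0 < r) (hr1 : r < 1) (hs0 : 0 < s) (hs1 : s < 1) :
    (1 - s) * greenG r s ≤ (-Real.log r) * (s * Real.log s ^ 2)⁻¹ := by
  have hD : 0 < s * Real.log s ^ 2 := by
    have h3 := logneg hs0 hs1
    have h4 : Real.log s ≠ 0 := by linarith
    positivity
  have h1 : greenG r s ≤ (-Real.log r) * (s * Real.log s ^ 2)⁻¹ := by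
    unfold greenG
    rw [div_eq_mul_inv]
    exact mul_le_mul_of_nonneg_right (min_le_left _ _) (inv_pos.mpr hD).le
  have h0 := green_nonneg hr0 hr1 hs0 hs1
  nlinarith [green_nonneg hr0 hr1 hs0 hs1, mul_le_mul_of_nonneg_right h1 (by linarith : (0:ℝ) ≤ 1 - s)]

lemma green_le2 {r s : ℝ} (hr0 : 0 < r) (hr1 : r < 1) (hs0 : 0 < s) (hs1 : s < 1) :
    (1 - s) * greenG r s ≤ (1 - s) * (s * -Real.log s)⁻¹ := by
  have hl := logneg hs0 hs1
  have h1 : greenG r s ≤ (s * -Real.log s)⁻¹ := by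
    unfold greenG
    rw [div_eq_mul_inv]
    have hD : (0:ℝ) < s * Real.log s ^ 2 := by
      have h4 : Real.log s ≠ 0 := by linarith
      positivity
    have : min (-Real.log r) (-Real.log s) * (s * Real.log s ^ 2)⁻¹ ≤
        (-Real.log s) * (s * Real.log s ^ 2)⁻¹ :=
      mul_le_mul_of_nonneg_right (min_le_right _ _) (inv_pos.mpr hD).le
    refine this.trans (le_of_eq ?_)
    rw [eq_comm, inv_eq_iff_eq_inv, eq_comm]
    field_simp
  exact mul_le_mul_of_nonneg_left h1 (by linarith)

lemma green_le3 {r s : ℝ} (hr0 : 0 < r) (hr1 : r < 1) (hs0 : (1:ℝ)/2 ≤ s) (hs1 : s < 1) :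
    (1 - s) * greenG r s ≤ 2 := by
  have hs0' : (0:ℝ) < s := by linarith
  have hl := logneg hs0' hs1
  have h1 := green_le2 hr0 hr1 hs0' hs1
  have h2 : (1 - s) * (s * -Real.log s)⁻¹ ≤ 2 := by
    have hlog : 1 - s ≤ -Real.log s := by
      have := Real.log_le_sub_one_of_pos hs0'
      linarith
    rw [mul_inv, ← mul_assoc]
    have hmul : (1 - s) * (-Real.log s)⁻¹ ≤ 1 := by
      rw [← div_eq_mul_inv, div_le_one hl]
      exact hlog
    calc (1 - s) * s⁻¹ * (-Real.log s)⁻¹ = s⁻¹ * ((1 - s) * (-Real.log s)⁻¹) := by ring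
      _ ≤ s⁻¹ * 1 := by
          apply mul_le_mul_of_nonneg_left hmul (by positivity)
      _ ≤ 2 := by
          rw [mul_one]
          rw [inv_le_comm₀ (by positivity) (by norm_num)]
          linarith
  linarith

lemma green_integrable {r : ℝ} (hr0 : 0 < r) (hr1 : r < 1) :
    IntegrableOn (fun s => (1 - s) * greenG r s) (Ioo (0:ℝ) 1) volume := by
  have hsplit : Ioo (0:ℝ) 1 = Ioo 0 (1/2) ∪ Ico (1/2) 1 :=
    (Ioo_union_Ico_eq_Ioo (by norm_num) (by norm_num)).symm
  rw [hsplit]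
  apply IntegrableOn.union
  · apply Integrable.mono' ((integrable1 (by norm_num) (by norm_num)).const_mul (-Real.log r))
      (green_meas r).aestronglyMeasurable.restrict
    filter_upwards [ae_restrict_mem measurableSet_Ioo] with s hs
    rw [Real.norm_eq_abs, abs_of_nonneg (green_nonneg hr0 hr1 hs.1 (by linarith [hs.2]))]
    exact green_le1 hr0 hr1 hs.1 (by linarith [hs.2])
  · apply Integrable.mono' (g := fun _ => (2:ℝ))
      (integrableOn_const (by rw [Real.volume_Ico]; exact ENNReal.ofReal_ne_top))
      (green_meas r).aestronglyMeasurable.restrict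
    filter_upwards [ae_restrict_mem measurableSet_Ico] with s hs
    rw [Real.norm_eq_abs, abs_of_nonneg (green_nonneg hr0 hr1 (by linarith [hs.1]) hs.2)]
    exact green_le3 hr0 hr1 hs.1 hs.2

lemma green_bound {r : ℝ} (hr0 : 0 < r) (hr2 : r ≤ 1/2) :
    (∫ s in Ioo (0:ℝ) 1, (1 - s) * greenG r s) ≤ 13 * Real.log (1 - Real.log r) := by
  have hr1 : r < 1 := lt_of_le_of_lt hr2 (by norm_num)
  have hint := green_integrable hr0 hr1
  set f : ℝ → ℝ := fun s => (1 - s) * greenG r s with hf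
  -- splits
  have hd1 : Disjoint (Ioo (0:ℝ) (1/2)) (Ico (1/2) 1) :=
    Set.disjoint_left.mpr fun x hx hx' => absurd hx.2 (not_lt.mpr hx'.1)
  have hd2 : Disjoint (Ioo (0:ℝ) r) (Ico r (1/2)) :=
    Set.disjoint_left.mpr fun x hx hx' => absurd hx.2 (not_lt.mpr hx'.1)
  have hu1 : Ioo (0:ℝ) 1 = Ioo 0 (1/2) ∪ Ico (1/2) 1 :=
    (Ioo_union_Ico_eq_Ioo (by norm_num) (by norm_num)).symm
  have hu2 : Ioo (0:ℝ) (1/2) = Ioo 0 r ∪ Ico r (1/2) :=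
    (Ioo_union_Ico_eq_Ioo hr0 hr2).symm
  have hi1 : IntegrableOn f (Ioo 0 (1/2)) volume := hint.mono_set (by rw [hu1]; exact subset_union_left)
  have hi2 : IntegrableOn f (Ico (1/2) 1) volume := hint.mono_set (by rw [hu1]; exact subset_union_right)
  have hi3 : IntegrableOn f (Ioo 0 r) volume := hi1.mono_set (by rw [hu2]; exact subset_union_left)
  have hi4 : IntegrableOn f (Ico r (1/2)) volume := hi1.mono_set (by rw [hu2]; exact subset_union_right)
  have hsum1 : (∫ s in Ioo (0:ℝ) 1, f s) = (∫ s in Ioo (0:ℝ) (1/2), f s) + ∫ s in Ico (1/2:ℝ) 1, f s := by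
    rw [hu1]; exact setIntegral_union hd1 measurableSet_Ico hi1 hi2
  have hsum2 : (∫ s in Ioo (0:ℝ) (1/2), f s) = (∫ s in Ioo (0:ℝ) r, f s) + ∫ s in Ico r (1/2:ℝ), f s := by
    rw [hu2]; exact setIntegral_union hd2 measurableSet_Ico hi3 hi4
  -- bound on Ioo 0 r
  have hA1 : (∫ s in Ioo (0:ℝ) r, f s) ≤ 1 := by
    have hmaj : IntegrableOn (fun s => (-Real.log r) * (s * Real.log s ^ 2)⁻¹) (Ioo 0 r) volume :=
      (integrable1 hr0 hr1).const_mul _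
    have hle := setIntegral_mono_on hi3 hmaj measurableSet_Ioo
      (fun s hs => green_le1 hr0 hr1 hs.1 (hs.2.trans hr1))
    rw [integral_const_mul, value1 hr0 hr1] at hle
    rw [mul_inv_cancel₀ (logneg hr0 hr1).ne'] at hle
    exact hle
  -- bound on Ico r (1/2)
  have hA2 : (∫ s in Ico r (1/2:ℝ), f s) ≤ Real.log (-Real.log r) - Real.log (Real.log 2) := by
    have hcont : ContinuousOn (fun s : ℝ => (s * -Real.log s)⁻¹) (Icc r (1/2)) := by
      intro x hx
      have hx0 : 0 < x := lt_of_lt_of_le hr0 hx.1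
      have hx1 : x < 1 := lt_of_le_of_lt hx.2 (by norm_num)
      have hl := logneg hx0 hx1
      exact (((continuousAt_id).mul ((Real.continuousAt_log hx0.ne').neg)).inv₀
        (mul_pos hx0 hl).ne').continuousWithinAt
    have hmaj : IntegrableOn (fun s : ℝ => (s * -Real.log s)⁻¹) (Ico r (1/2)) volume :=
      (hcont.integrableOn_Icc).mono_set Ico_subset_Icc_self
    have hle := setIntegral_mono_on hi4 hmaj measurableSet_Ico (fun s hs => by
      have hs0 : 0 < s := lt_of_lt_of_le hr0 hs.1
      have hs1 : s < 1 := lt_of_lt_of_le hs.2 (by norm_num)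
      have h2 := green_le2 hr0 hr1 hs0 hs1
      have hinv : (0:ℝ) ≤ (s * -Real.log s)⁻¹ := by
        have := logneg hs0 hs1; positivity
      show (1 - s) * greenG r s ≤ _
      nlinarith [hs0.le])
    rw [MeasureTheory.integral_Ico_eq_integral_Ioo]
    rw [MeasureTheory.integral_Ico_eq_integral_Ioo, MeasureTheory.integral_Ico_eq_integral_Ioo,
      value2 hr0 hr2] at hle
    exact hle
  -- bound on Ico (1/2) 1
  have hA3 : (∫ s in Ico (1/2:ℝ) 1, f s) ≤ 1 := by
    have hle := setIntegral_mono_on hi2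
      (integrableOn_const (by rw [Real.volume_Ico]; exact ENNReal.ofReal_ne_top))
      measurableSet_Ico (fun s hs => green_le3 hr0 hr1 hs.1 hs.2)
    rw [setIntegral_const] at hle
    rw [Real.volume_real_Ico] at hle
    norm_num at hle
    linarith
  -- numerics
  set L := Real.log (1 - Real.log r) with hL
  have hlog2pos : (0:ℝ) < Real.log 2 := Real.log_pos one_lt_two
  have hlog2gt := Real.log_two_gt_d9
  have h2 : Real.log 2 ≤ -Real.log r := by
    have : Real.log r ≤ Real.log (1/2) := Real.log_le_log hr0 hr2
    rw [show (1/2:ℝ) = 2⁻¹ by norm_num, Real.log_inv] at this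
    linarith
  have hlt : Real.log (-Real.log r) ≤ L := Real.log_le_log (logneg hr0 hr1) (by nlinarith)
  have hLlb : 2/5 ≤ L := by
    have h169 : 1 + Real.log 2 ≤ 1 - Real.log r := by linarith
    have hL1 : Real.log (1 + Real.log 2) ≤ L := Real.log_le_log (by linarith) h169
    have hlow : Real.log ((1 + Real.log 2)⁻¹) ≤ (1 + Real.log 2)⁻¹ - 1 :=
      Real.log_le_sub_one_of_pos (by positivity)
    rw [Real.log_inv] at hlow
    have hinv : (1 + Real.log 2)⁻¹ ≤ (1.6931471803:ℝ)⁻¹ := by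
      apply inv_anti₀ (by norm_num) (by linarith)
    have : 1 - (1.6931471803:ℝ)⁻¹ ≥ 2/5 := by norm_num
    linarith
  have hloglog : -Real.log (Real.log 2) ≤ 1/2 := by
    have hlow : Real.log ((Real.log 2)⁻¹) ≤ (Real.log 2)⁻¹ - 1 :=
      Real.log_le_sub_one_of_pos (by positivity)
    rw [Real.log_inv] at hlow
    have hinv : (Real.log 2)⁻¹ ≤ (0.6931471803:ℝ)⁻¹ := by
      apply inv_anti₀ (by norm_num) (by linarith)
    have : (0.6931471803:ℝ)⁻¹ - 1 ≤ 1/2 := by norm_num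
    linarith
  have : (∫ s in Ioo (0:ℝ) 1, f s) ≤ L + 5/2 := by
    rw [hsum1, hsum2]; linarith
  linarith

lemma green_tendsto : Filter.Tendsto (fun r : ℝ => ∫ s in Ioo (0:ℝ) 1, (1 - s) * greenG r s)
    (nhdsWithin 1 (Iio 1)) (nhds 0) := by
  have key := MeasureTheory.tendsto_integral_filter_of_dominated_convergence
    (μ := volume.restrict (Ioo (0:ℝ) 1)) (l := nhdsWithin (1:ℝ) (Iio 1))
    (F := fun r s => (1 - s) * greenG r s) (f := fun _ => (0:ℝ))
    (bound := fun s => (1 - s) * greenG (1/2) s)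
    (Filter.Eventually.of_forall fun r => (green_meas r).aestronglyMeasurable.restrict)
    ?_ (green_integrable (by norm_num) (by norm_num)) ?_
  · simpa using key
  · -- eventual bound
    have hmem : Ioo (1/2:ℝ) 2 ∈ nhdsWithin (1:ℝ) (Iio 1) :=
      nhdsWithin_le_nhds (Ioo_mem_nhds (by norm_num) (by norm_num))
    filter_upwards [hmem, self_mem_nhdsWithin] with r hr hr1
    have hr0 : (0:ℝ) < r := by linarith [hr.1]
    have hr1' : r < 1 := hr1
    filter_upwards [ae_restrict_mem measurableSet_Ioo] with s hs
    rw [Real.norm_eq_abs, abs_of_nonneg (green_nonneg hr0 hr1' hs.1 hs.2)]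
    have hD : (0:ℝ) < s * Real.log s ^ 2 := by
      have h3 := logneg hs.1 hs.2
      exact mul_pos hs.1 (pow_two_pos_of_ne_zero (by intro h; rw [h] at h3; simp at h3))
    have hmin : min (-Real.log r) (-Real.log s) ≤ min (-Real.log (1/2)) (-Real.log s) := by
      apply min_le_min _ le_rfl
      have : Real.log (1/2) ≤ Real.log r := Real.log_le_log (by norm_num) hr.1.le
      linarith
    have : greenG r s ≤ greenG (1/2) s := by
      unfold greenG
      exact (div_le_div_iff_of_pos_right hD).mpr hmin
    have hs1 : (0:ℝ) ≤ 1 - s := by linarith [hs.2]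
    nlinarith
  · -- pointwise limit
    filter_upwards [ae_restrict_mem measurableSet_Ioo] with s hs
    have hD : (0:ℝ) < s * Real.log s ^ 2 := by
      have h3 := logneg hs.1 hs.2
      exact mul_pos hs.1 (pow_two_pos_of_ne_zero (by intro h; rw [h] at h3; simp at h3))
    have hcont : Filter.Tendsto (fun r : ℝ => (1 - s) * greenG r s) (nhds 1)
        (nhds ((1 - s) * greenG 1 s)) := by
      apply Filter.Tendsto.const_mul
      unfold greenG
      exact (((Real.continuousAt_log one_ne_zero).neg.min continuousAt_const).div_const _)
    have hval : greenG 1 s = 0 := by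
      unfold greenG
      rw [Real.log_one, neg_zero, min_eq_left (by linarith [logneg hs.1 hs.2])]
      simp
    rw [hval, mul_zero] at hcont
    exact hcont.mono_left nhdsWithin_le_nhds


/-- (i) `s ↦ (1−s) G(r,s)` is integrable on `(0,1)` for every `r ∈ (0,1)`;
(ii) there is `C > 0` with `∫₀¹ (1−s) G(r,s) ds ≤ C log(1 − log r)` for `r ∈ (0,1/2]`;
(iii) `∫₀¹ (1−s) G(r,s) ds → 0` as `r → 1⁻`. -/
theorem green_function_estimates :
    (∀ r ∈ Ioo (0:ℝ) 1, IntegrableOn (fun s => (1 - s) * greenG r s) (Ioo (0:ℝ) 1) volume) ∧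
    (∃ C : ℝ, 0 < C ∧ ∀ r ∈ Ioc (0:ℝ) (1/2),
      (∫ s in Ioo (0:ℝ) 1, (1 - s) * greenG r s) ≤ C * Real.log (1 - Real.log r)) ∧
    Filter.Tendsto (fun r : ℝ => ∫ s in Ioo (0:ℝ) 1, (1 - s) * greenG r s)
      (nhdsWithin 1 (Iio 1)) (nhds 0) :=
  ⟨fun r hr => green_integrable hr.1 hr.2,
   ⟨13, by norm_num, fun r hr => green_bound hr.1 hr.2⟩,
   green_tendsto⟩
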